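/- For every K > 0 there exist constants 0 < c ≤ C depending only on K such that for every real p with 1 ≤ p < ∞, every strictly increasing sequence λ : ℤ → ℝ with λ_n → ±∞ as n → ±∞ and λ_{n+1} − λ_n ≤ K for all n, and every f : ℤ → ℂ, the trace norm satisfies c·(∑_{n∈ℤ} (λ_{n+1} − λ_n)|f[λ_n,λ_{n+1}]|^p + ∑_{n∈ℤ} (λ_{n+1} − λ_n)|f_n|^p)^{1/p} ≤ ‖f‖_{W^1_p|Λ} ≤ C·(∑_{n∈ℤ} (λ_{n+1} − λ_n)|f[λ_n,λ_{n+1}]|^p + ∑_{n∈ℤ} (λ_{n+1} − λ_n)|f_n|^p)^{1/p}, both sides interpreted in [0,∞]. -/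

import Mathlib

open MeasureTheory
open scoped ENNReal NNReal

/-- `lam` is a strictly increasing sequence tending to `-∞` at `-∞` and `+∞` at `+∞`. -/
def GoodSeq (lam : ℤ → ℝ) : Prop :=
  StrictMono lam ∧ Filter.Tendsto lam Filter.atBot Filter.atBot ∧
    Filter.Tendsto lam Filter.atTop Filter.atTop

/-- `F` is an admissible `r`-extension of `f : ℤ → ℂ`, with associated `r`-th derivative `G`:
`F` is `(r-1)` times continuously differentiable, `G` is locally integrable,
`F^{(r-1)}(b) - F^{(r-1)}(a) = ∫_a^b G` for all `a ≤ b`, and `F (lam n) = f n` for all `n`. -/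
def AdmissibleExt (r : ℕ) (lam : ℤ → ℝ) (f : ℤ → ℂ) (F G : ℝ → ℂ) : Prop :=
  ContDiff ℝ (r - 1 : ℕ) F ∧ MeasureTheory.LocallyIntegrable G volume ∧
  (∀ a b : ℝ, a ≤ b →
      iteratedDeriv (r - 1) F b - iteratedDeriv (r - 1) F a = ∫ t in a..b, G t) ∧
  (∀ n : ℤ, F (lam n) = f n)

/-- Homogeneous trace seminorm `‖f‖_{L^r_p|Λ}`, valued in `[0,∞]`. -/
noncomputable def traceL (r : ℕ) (p : ℝ) (lam : ℤ → ℝ) (f : ℤ → ℂ) : ℝ≥0∞ :=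
  ⨅ (F : ℝ → ℂ) (G : ℝ → ℂ) (_ : AdmissibleExt r lam f F G),
    (∫⁻ t, ENNReal.ofReal (‖G t‖ ^ p)) ^ (1 / p)

/-- Trace norm `‖f‖_{W^r_p|Λ}`, valued in `[0,∞]`. -/
noncomputable def traceW (r : ℕ) (p : ℝ) (lam : ℤ → ℝ) (f : ℤ → ℂ) : ℝ≥0∞ :=
  ⨅ (F : ℝ → ℂ) (G : ℝ → ℂ) (_ : AdmissibleExt r lam f F G),
    ((∫⁻ t, ENNReal.ofReal (‖F t‖ ^ p)) +
      (∫⁻ t, ENNReal.ofReal (‖G t‖ ^ p))) ^ (1 / p)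

/-- First order divided difference `f[λ_n, λ_{n+1}]`. -/
noncomputable def dd1 (lam : ℤ → ℝ) (f : ℤ → ℂ) (n : ℤ) : ℂ :=
  (f (n + 1) - f n) / ((lam (n + 1) - lam n : ℝ) : ℂ)

/-- Second order divided difference `f[λ_n, λ_{n+1}, λ_{n+2}]`. -/
noncomputable def dd2 (lam : ℤ → ℝ) (f : ℤ → ℂ) (n : ℤ) : ℂ :=
  (dd1 lam f (n + 1) - dd1 lam f n) / ((lam (n + 2) - lam n : ℝ) : ℂ)

/-- Divided difference `f[λ_n, …, λ_{n+k}]` of order `k`. -/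
noncomputable def ddiv (lam : ℤ → ℝ) (f : ℤ → ℂ) (n : ℤ) (k : ℕ) : ℂ :=
  ∑ i ∈ Finset.range (k + 1),
    f (n + (i : ℤ)) /
      ∏ j ∈ (Finset.range (k + 1)).erase i,
        ((lam (n + (i : ℤ)) - lam (n + (j : ℤ)) : ℝ) : ℂ)

/-- Divided difference of values `v` at (distinct) points `x`. -/
noncomputable def ddPts {m : ℕ} (x : Fin m → ℝ) (v : Fin m → ℂ) : ℂ :=
  ∑ i, v i / ∏ j ∈ Finset.univ.erase i, ((x i - x j : ℝ) : ℂ)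

/-- `F` is of class `W^r` on `[a,b]` with `r`-th derivative `G`. -/
def ClassW (r : ℕ) (a b : ℝ) (F G : ℝ → ℂ) : Prop :=
  ContDiffOn ℝ (r - 1 : ℕ) F (Set.Icc a b) ∧ MeasureTheory.IntegrableOn G (Set.Icc a b) ∧
  ∀ x y : ℝ, a ≤ x → x ≤ y → y ≤ b →
    iteratedDerivWithin (r - 1) F (Set.Icc a b) y -
      iteratedDerivWithin (r - 1) F (Set.Icc a b) x = ∫ t in x..y, G t

/-- `‖f‖_{eq,L}^p`, valued in `[0,∞]`. -/
noncomputable def eqLp (r : ℕ) (p : ℝ) (lam : ℤ → ℝ) (f : ℤ → ℂ) : ℝ≥0∞ :=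
  ∑' n : ℤ, ENNReal.ofReal ((lam (n + (r : ℤ)) - lam n) * ‖ddiv lam f n r‖ ^ p)

/-- `‖f‖_{eq,W}^p`, valued in `[0,∞]`. -/
noncomputable def eqWp (r : ℕ) (p : ℝ) (lam : ℤ → ℝ) (f : ℤ → ℂ) : ℝ≥0∞ :=
  eqLp r p lam f +
    ∑ j ∈ Finset.range r, ∑' n : ℤ,
      ENNReal.ofReal ((lam (n + (r : ℤ)) - lam n) ^ ((j : ℝ) * p + 1) *
        ‖ddiv lam f n j‖ ^ p)

/-- The cubic `q(x) = 4(x² - x³)`. -/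
noncomputable def qcub : ℝ → ℝ := fun x => 4 * (x ^ 2 - x ^ 3)

/-- `α_n(f) = (h_n f[λ_{n-1},λ_n] + h_{n-1} f[λ_n,λ_{n+1}])/(h_{n-1}+h_n)`. -/
noncomputable def alphaN (lam : ℤ → ℝ) (f : ℤ → ℂ) (n : ℤ) : ℂ :=
  (((lam (n + 1) - lam n : ℝ) : ℂ) * dd1 lam f (n - 1) +
      ((lam n - lam (n - 1) : ℝ) : ℂ) * dd1 lam f n) /
    ((lam (n + 1) - lam (n - 1) : ℝ) : ℂ)

/-- The formula for `Φ₁ f` on `[λ_n, λ_{n+1}]`. -/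
noncomputable def phi1P (lam : ℤ → ℝ) (f : ℤ → ℂ) (n : ℤ) (x : ℝ) : ℂ :=
  f n * (((lam (n + 1) - x) / (lam (n + 1) - lam n) : ℝ) : ℂ) +
    f (n + 1) * (((x - lam n) / (lam (n + 1) - lam n) : ℝ) : ℂ)

/-- The formula for `Φ₂ f` on `[μ_{n-1}, λ_n]`. -/
noncomputable def phi2L (lam : ℤ → ℝ) (f : ℤ → ℂ) (n : ℤ) (x : ℝ) : ℂ :=
  f n + alphaN lam f n * ((x - lam n : ℝ) : ℂ) +
    (((lam n - lam (n - 1)) ^ 2 : ℝ) : ℂ) * dd2 lam f (n - 1) *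
      ((qcub ((lam n - x) / (lam n - lam (n - 1))) : ℝ) : ℂ)

/-- The formula for `Φ₂ f` on `[λ_n, μ_n]`. -/
noncomputable def phi2R (lam : ℤ → ℝ) (f : ℤ → ℂ) (n : ℤ) (x : ℝ) : ℂ :=
  f n + alphaN lam f n * ((x - lam n : ℝ) : ℂ) +
    (((lam (n + 1) - lam n) ^ 2 : ℝ) : ℂ) * dd2 lam f (n - 1) *
      ((qcub ((x - lam n) / (lam (n + 1) - lam n)) : ℝ) : ℂ)

section Aux
variable {lam : ℤ → ℝ} {p K : ℝ}

lemma GoodSeq.exists_idx (hlam : GoodSeq lam) (t : ℝ) :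
    ∃ n, lam n ≤ t ∧ t < lam (n + 1) := by
  obtain ⟨hmono, hbot, htop⟩ := hlam
  obtain ⟨m, hm⟩ := (htop.eventually_gt_atTop t).exists
  obtain ⟨m', hm'⟩ := (hbot.eventually_le_atBot t).exists
  obtain ⟨n, hn1, hn2⟩ := Int.exists_greatest_of_bdd (P := fun n => lam n ≤ t)
    ⟨m, fun z hz => by
      by_contra h
      exact absurd (hm.trans_le (hmono.monotone (by omega))) (not_lt.2 hz)⟩ ⟨m', hm'⟩
  refine ⟨n, hn1, ?_⟩
  by_contra h
  exact absurd (hn2 _ (not_lt.1 h)) (by omega)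

lemma idx_unique (hmono : StrictMono lam) {n m : ℤ} {t : ℝ} (h1 : lam n ≤ t)
    (h2 : t < lam (n + 1)) (h3 : lam m ≤ t) (h4 : t < lam (m + 1)) : n = m := by
  by_contra h
  rcases Ne.lt_or_gt h with h' | h'
  · exact absurd (le_trans (hmono.monotone (by omega : n + 1 ≤ m)) h3) (not_le.2 h2)
  · exact absurd (le_trans (hmono.monotone (by omega : m + 1 ≤ n)) h1) (not_le.2 h4)

lemma pairwise_disjoint_Ico (hmono : StrictMono lam) :
    Pairwise (Function.onFun Disjoint fun n => Set.Ico (lam n) (lam (n + 1))) := by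
  intro m n h
  rcases Ne.lt_or_gt h with h' | h'
  · refine Set.disjoint_left.2 fun x hx hx' => ?_
    have := hmono.monotone (by omega : m + 1 ≤ n)
    exact absurd (hx'.1) (not_le.2 (lt_of_lt_of_le hx.2 this))
  · refine Set.disjoint_left.2 fun x hx hx' => ?_
    have := hmono.monotone (by omega : n + 1 ≤ m)
    exact absurd (hx.1) (not_le.2 (lt_of_lt_of_le hx'.2 this))

lemma pairwise_disjoint_Ioc (hmono : StrictMono lam) :
    Pairwise (Function.onFun Disjoint fun n => Set.Ioc (lam n) (lam (n + 1))) := by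
  intro m n h
  rcases Ne.lt_or_gt h with h' | h'
  · refine Set.disjoint_left.2 fun x hx hx' => ?_
    have := hmono.monotone (by omega : m + 1 ≤ n)
    exact absurd hx'.1 (not_lt.2 (hx.2.trans this))
  · refine Set.disjoint_left.2 fun x hx hx' => ?_
    have := hmono.monotone (by omega : n + 1 ≤ m)
    exact absurd hx.1 (not_lt.2 (hx'.2.trans this))

lemma iUnion_Ico_eq_univ (hlam : GoodSeq lam) :
    (⋃ n : ℤ, Set.Ico (lam n) (lam (n + 1))) = Set.univ := by
  refine Set.eq_univ_iff_forall.2 fun t => ?_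
  obtain ⟨n, h1, h2⟩ := hlam.exists_idx t
  exact Set.mem_iUnion.2 ⟨n, h1, h2⟩

/-- `(a+b)^p ≤ 2^p (a^p + b^p)` in `ℝ≥0∞`. -/
lemma ennreal_add_rpow_le (hp : 1 ≤ p) (a b : ℝ≥0∞) :
    (a + b) ^ p ≤ 2 ^ p * (a ^ p + b ^ p) := by
  have hp0 : 0 ≤ p := by linarith
  calc (a + b) ^ p ≤ (2 * max a b) ^ p := by
        refine ENNReal.rpow_le_rpow ?_ hp0
        rw [two_mul]
        exact add_le_add (le_max_left _ _) (le_max_right _ _)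
    _ = 2 ^ p * (max a b) ^ p := ENNReal.mul_rpow_of_nonneg _ _ hp0
    _ ≤ 2 ^ p * (a ^ p + b ^ p) := by
        gcongr
        rcases le_total a b with h | h
        · rw [max_eq_right h]; exact le_add_self
        · rw [max_eq_left h]; exact le_self_add

/-- Hölder: `∫_I ‖G‖ ≤ (∫_I ‖G‖^p)^{1/p} |I|^{1-1/p}`. -/
lemma lintegral_nnnorm_le_holder {G : ℝ → ℂ} {a b : ℝ} (hp : 1 ≤ p)
    (hG : AEStronglyMeasurable G (volume.restrict (Set.Ioc a b))) :
    (∫⁻ t in Set.Ioc a b, (‖G t‖₊ : ℝ≥0∞)) ≤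
      (∫⁻ t in Set.Ioc a b, (‖G t‖₊ : ℝ≥0∞) ^ p) ^ (1 / p) *
        ENNReal.ofReal (b - a) ^ (1 - 1 / p) := by
  have h := eLpNorm'_le_eLpNorm'_mul_rpow_measure_univ (p := 1) (q := p) one_pos hp hG
  simp only [eLpNorm', ENNReal.rpow_one, one_div_one, Measure.restrict_apply_univ,
    Real.volume_Ioc] at h
  simpa [one_div, enorm_eq_nnnorm] using h

end Aux

section Aux2
variable {p K : ℝ}

/-- From Hölder, for `d = |∫ G|/(b-a)`: `d^p (b-a) ≤ ∫_I ‖G‖^p`. -/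
lemma key_holder {G : ℝ → ℂ} {a b : ℝ} (hp : 1 ≤ p) (hab : a < b)
    (hGi : IntegrableOn G (Set.Ioc a b)) {d : ℝ}
    (hd : d = ‖∫ t in a..b, G t‖ / (b - a)) :
    ENNReal.ofReal ((b - a) * d ^ p) ≤ ∫⁻ t in Set.Ioc a b, (‖G t‖₊ : ℝ≥0∞) ^ p := by
  have hp0 : (0:ℝ) < p := by linarith
  have hba : (0:ℝ) < b - a := by linarith
  set H : ℝ≥0∞ := ENNReal.ofReal (b - a) with hH
  set B : ℝ≥0∞ := ∫⁻ t in Set.Ioc a b, (‖G t‖₊ : ℝ≥0∞) ^ p with hB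
  have hH0 : H ≠ 0 := by
    simp only [hH, ne_eq, ENNReal.ofReal_eq_zero, not_le]
    linarith
  have hHtop : H ≠ ∞ := ENNReal.ofReal_ne_top
  have hd0 : 0 ≤ d := hd ▸ div_nonneg (norm_nonneg _) hba.le
  -- step 1 : |∫ G| ≤ ∫⁻ ‖G‖
  have step1 : ENNReal.ofReal (‖∫ t in a..b, G t‖) ≤
      ∫⁻ t in Set.Ioc a b, (‖G t‖₊ : ℝ≥0∞) := by
    rw [intervalIntegral.integral_of_le hab.le]
    calc ENNReal.ofReal (‖∫ t in Set.Ioc a b, G t‖)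
        ≤ ENNReal.ofReal (∫ t in Set.Ioc a b, ‖G t‖) := by
          apply ENNReal.ofReal_le_ofReal
          exact norm_integral_le_integral_norm _
      _ = _ := ofReal_integral_norm_eq_lintegral_enorm hGi
  -- step 2 : Hölder
  have step2 : (∫⁻ t in Set.Ioc a b, (‖G t‖₊ : ℝ≥0∞)) ≤ B ^ (1/p) * H ^ (1 - 1/p) := by
    have h := eLpNorm'_le_eLpNorm'_mul_rpow_measure_univ (p := 1) (q := p) one_pos hp
      hGi.aestronglyMeasurable
    simp only [eLpNorm', ENNReal.rpow_one, one_div_one, Measure.restrict_apply_univ,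
      Real.volume_Ioc] at h
    simpa [one_div, hB, hH, enorm_eq_nnnorm] using h
  have habs : ENNReal.ofReal (‖∫ t in a..b, G t‖) = ENNReal.ofReal d * H := by
    rw [hH, ← ENNReal.ofReal_mul hd0, hd]
    congr 1
    field_simp
  have hsplit : H = H ^ (1/p) * H ^ (1 - 1/p) := by
    rw [← ENNReal.rpow_add _ _ hH0 hHtop]
    norm_num
  have hcancel : ENNReal.ofReal d * H ^ (1/p) ≤ B ^ (1/p) := by
    have h1 : ENNReal.ofReal d * H ^ (1/p) * H ^ (1 - 1/p) ≤ B ^ (1/p) * H ^ (1 - 1/p) := by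
      rw [mul_assoc, ← hsplit, ← habs]
      exact step1.trans step2
    have hne0 : H ^ (1 - 1/p) ≠ 0 :=
      (ENNReal.rpow_pos (lt_of_le_of_ne zero_le (Ne.symm hH0)) hHtop).ne'
    have hnetop : H ^ (1 - 1/p) ≠ ∞ :=
      ENNReal.rpow_ne_top_of_nonneg (sub_nonneg.2 ((div_le_one hp0).2 hp)) hHtop
    exact (ENNReal.mul_le_mul_iff_left hne0 hnetop).1 h1
  have := ENNReal.rpow_le_rpow hcancel hp0.le
  rw [ENNReal.mul_rpow_of_nonneg _ _ hp0.le, ← ENNReal.rpow_mul, ← ENNReal.rpow_mul,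
    one_div_mul_cancel hp0.ne', ENNReal.rpow_one, ENNReal.rpow_one] at this
  calc ENNReal.ofReal ((b - a) * d ^ p) = ENNReal.ofReal d ^ p * H := by
        rw [hH, ENNReal.ofReal_rpow_of_nonneg hd0 hp0.le,
          ← ENNReal.ofReal_mul (by positivity), mul_comm]
    _ ≤ B := this

/-- coefficient combination lemma. -/
lemma combine_le (hp : 1 ≤ p) (hK : 0 < K) {X Y A B : ℝ≥0∞}
    (h1 : X ≤ B) (h2 : Y ≤ 2 ^ p * (A + ENNReal.ofReal (max 1 K) ^ p * B)) :
    X + Y ≤ ENNReal.ofReal (8 * max 1 K) ^ p * (A + B) := by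
  have hp0 : (0:ℝ) ≤ p := by linarith
  set eK : ℝ≥0∞ := ENNReal.ofReal (max 1 K) with heK
  have h1K : (1:ℝ≥0∞) ≤ eK := by
    rw [heK, ← ENNReal.ofReal_one]
    exact ENNReal.ofReal_le_ofReal (le_max_left _ _)
  have h1Kp : (1:ℝ≥0∞) ≤ eK ^ p := by
    calc (1:ℝ≥0∞) = 1 ^ p := (ENNReal.one_rpow p).symm
      _ ≤ eK ^ p := ENNReal.rpow_le_rpow h1K hp0
  have h2p : (2:ℝ≥0∞) ≤ 2 ^ p := by
    calc (2:ℝ≥0∞) = 2 ^ (1:ℝ) := (ENNReal.rpow_one 2).symm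
      _ ≤ 2 ^ p := ENNReal.rpow_le_rpow_of_exponent_le (by norm_num) hp
  have hcoeff : (1:ℝ≥0∞) + (2 ^ p + 2 ^ p * eK ^ p) ≤ ENNReal.ofReal (8 * max 1 K) ^ p := by
    have e8 : ENNReal.ofReal (8 * max 1 K) ^ p = 8 ^ p * eK ^ p := by
      rw [ENNReal.ofReal_mul (by norm_num), ← ENNReal.mul_rpow_of_nonneg _ _ hp0]
      rw [heK]; norm_num
    have h8 : (8:ℝ≥0∞) ^ p = 4 ^ p * 2 ^ p := by
      rw [← ENNReal.mul_rpow_of_nonneg _ _ hp0]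
      norm_num
    have h34 : (3:ℝ≥0∞) ≤ 4 ^ p := by
      calc (3:ℝ≥0∞) ≤ 4 ^ (1:ℝ) := by rw [ENNReal.rpow_one]; norm_num
        _ ≤ 4 ^ p := ENNReal.rpow_le_rpow_of_exponent_le (by norm_num) hp
    calc (1:ℝ≥0∞) + (2 ^ p + 2 ^ p * eK ^ p)
        ≤ 2 ^ p * eK ^ p + (2 ^ p * eK ^ p + 2 ^ p * eK ^ p) := by
          gcongr
          · calc (1:ℝ≥0∞) = 1 * 1 := (one_mul 1).symm
              _ ≤ 2 ^ p * eK ^ p := mul_le_mul' (le_trans (by norm_num) h2p) h1Kp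
          · exact le_mul_of_one_le_right' h1Kp
      _ = 3 * (2 ^ p * eK ^ p) := by ring
      _ ≤ 4 ^ p * (2 ^ p * eK ^ p) := by gcongr
      _ = ENNReal.ofReal (8 * max 1 K) ^ p := by rw [e8, h8]; ring
  calc X + Y ≤ B + 2 ^ p * (A + eK ^ p * B) := add_le_add h1 h2
    _ ≤ (A + B) + 2 ^ p * ((A + B) + eK ^ p * (A + B)) :=
        add_le_add le_add_self (mul_le_mul_right
          (add_le_add le_self_add (mul_le_mul_right le_add_self _)) _)
    _ = (1 + (2 ^ p + 2 ^ p * eK ^ p)) * (A + B) := by ring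
    _ ≤ ENNReal.ofReal (8 * max 1 K) ^ p * (A + B) := mul_le_mul_left hcoeff _

end Aux2

section Lower
variable {p K : ℝ} {lam : ℤ → ℝ}

lemma ofReal_abs_rpow (hp0 : 0 ≤ p) (z : ℂ) :
    ENNReal.ofReal (‖z‖ ^ p) = (‖z‖₊ : ℝ≥0∞) ^ p := by
  rw [← enorm_eq_nnnorm, ← ofReal_norm_eq_enorm,
    ENNReal.ofReal_rpow_of_nonneg (norm_nonneg z) hp0]

lemma lower_est (hp : 1 ≤ p) (hK : 0 < K) (hlam : GoodSeq lam)
    (hstep : ∀ n : ℤ, lam (n + 1) - lam n ≤ K) (f : ℤ → ℂ) {F G : ℝ → ℂ}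
    (hFG : AdmissibleExt 1 lam f F G) :
    (∑' n : ℤ, ENNReal.ofReal ((lam (n + 1) - lam n) * ‖dd1 lam f n‖ ^ p)) +
      ∑' n : ℤ, ENNReal.ofReal ((lam (n + 1) - lam n) * ‖f n‖ ^ p) ≤
    ENNReal.ofReal (8 * max 1 K) ^ p *
      ((∫⁻ t, (‖F t‖₊ : ℝ≥0∞) ^ p) + ∫⁻ t, (‖G t‖₊ : ℝ≥0∞) ^ p) := by
  obtain ⟨hFcd, hGloc, hFTC, hinterp⟩ := hFG
  have hp0 : (0:ℝ) < p := by linarith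
  have hmono := hlam.1
  simp only [show (1 - 1 : ℕ) = 0 from rfl, iteratedDeriv_zero] at hFTC
  set A : ℝ≥0∞ := ∫⁻ t, (‖F t‖₊ : ℝ≥0∞) ^ p with hA
  set B : ℝ≥0∞ := ∫⁻ t, (‖G t‖₊ : ℝ≥0∞) ^ p with hB
  have hab : ∀ n : ℤ, lam n < lam (n + 1) := fun n => hmono (by omega)
  have hGi : ∀ n : ℤ, IntegrableOn G (Set.Ioc (lam n) (lam (n + 1))) :=
    fun n => (hGloc.integrableOn_isCompact isCompact_Icc).mono_set Set.Ioc_subset_Icc_self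
  have hBn_le : (∑' n : ℤ, ∫⁻ t in Set.Ioc (lam n) (lam (n + 1)), (‖G t‖₊ : ℝ≥0∞) ^ p) ≤ B := by
    rw [← lintegral_iUnion (fun n => measurableSet_Ioc) (pairwise_disjoint_Ioc hmono)]
    exact setLIntegral_le_lintegral _ _
  have hAn_le : (∑' n : ℤ, ∫⁻ t in Set.Ioc (lam n) (lam (n + 1)), (‖F t‖₊ : ℝ≥0∞) ^ p) ≤ A := by
    rw [← lintegral_iUnion (fun n => measurableSet_Ioc) (pairwise_disjoint_Ioc hmono)]
    exact setLIntegral_le_lintegral _ _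
  -- first sum
  have h1 : (∑' n : ℤ, ENNReal.ofReal ((lam (n + 1) - lam n) * ‖dd1 lam f n‖ ^ p))
      ≤ B := by
    refine le_trans (ENNReal.tsum_le_tsum fun n => ?_) hBn_le
    refine key_holder hp (hab n) (hGi n) ?_
    rw [dd1, norm_div, ← hFTC _ _ (hab n).le, Complex.norm_real, Real.norm_eq_abs,
      abs_of_pos (by linarith [hab n])]
    congr 1
    rw [hinterp, hinterp]
  -- second sum
  have h2 : (∑' n : ℤ, ENNReal.ofReal ((lam (n + 1) - lam n) * ‖f n‖ ^ p))
      ≤ 2 ^ p * (A + ENNReal.ofReal (max 1 K) ^ p * B) := by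
    have key : ∀ n : ℤ, ENNReal.ofReal ((lam (n + 1) - lam n) * ‖f n‖ ^ p) ≤
        2 ^ p * ((∫⁻ t in Set.Ioc (lam n) (lam (n + 1)), (‖F t‖₊ : ℝ≥0∞) ^ p) +
          ENNReal.ofReal (max 1 K) ^ p *
            ∫⁻ t in Set.Ioc (lam n) (lam (n + 1)), (‖G t‖₊ : ℝ≥0∞) ^ p) := by
      intro n
      set a := lam n with ha
      set b := lam (n + 1) with hb
      have hab' : a < b := hab n
      set I := Set.Ioc a b with hI
      set H : ℝ≥0∞ := ENNReal.ofReal (b - a) with hH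
      have hH0 : H ≠ 0 := by
        simp only [hH, ne_eq, ENNReal.ofReal_eq_zero, not_le]; linarith
      have hHtop : H ≠ ∞ := ENNReal.ofReal_ne_top
      set L : ℝ≥0∞ := ∫⁻ t in I, (‖G t‖₊ : ℝ≥0∞) with hL
      set Bn : ℝ≥0∞ := ∫⁻ t in I, (‖G t‖₊ : ℝ≥0∞) ^ p with hBn
      set An : ℝ≥0∞ := ∫⁻ t in I, (‖F t‖₊ : ℝ≥0∞) ^ p with hAn
      -- pointwise bound
      have hpt : ∀ t ∈ I, ((‖f n‖₊ : ℝ≥0∞)) ^ p ≤ 2 ^ p * ((‖F t‖₊ : ℝ≥0∞) ^ p + L ^ p) := by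
        intro t ht
        have h1' : ‖f n‖ ≤ ‖F t‖ + ‖F a - F t‖ := by
          rw [← hinterp n]
          have := norm_sub_norm_le (F a) (F t)
          linarith
        have h2' : ENNReal.ofReal ‖F a - F t‖ ≤ L := by
          rw [norm_sub_rev, hFTC a t ht.1.le]
          calc ENNReal.ofReal ‖∫ s in a..t, G s‖ ≤
              ENNReal.ofReal (∫ s in Set.Ioc a t, ‖G s‖) := by
                rw [intervalIntegral.integral_of_le ht.1.le]
                exact ENNReal.ofReal_le_ofReal (norm_integral_le_integral_norm _)
            _ = ∫⁻ s in Set.Ioc a t, (‖G s‖₊ : ℝ≥0∞) :=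
                ofReal_integral_norm_eq_lintegral_enorm
                  ((hGi n).mono_set (Set.Ioc_subset_Ioc_right ht.2))
            _ ≤ L := lintegral_mono_set (Set.Ioc_subset_Ioc_right ht.2)
        have h3' : ((‖f n‖₊ : ℝ≥0∞)) ≤ (‖F t‖₊ : ℝ≥0∞) + L := by
          calc ((‖f n‖₊ : ℝ≥0∞)) = ENNReal.ofReal ‖f n‖ := (ofReal_norm_eq_enorm _).symm
            _ ≤ ENNReal.ofReal (‖F t‖ + ‖F a - F t‖) := ENNReal.ofReal_le_ofReal h1'
            _ = ENNReal.ofReal ‖F t‖ + ENNReal.ofReal ‖F a - F t‖ :=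
                ENNReal.ofReal_add (norm_nonneg _) (norm_nonneg _)
            _ ≤ (‖F t‖₊ : ℝ≥0∞) + L := by
                rw [ofReal_norm_eq_enorm, enorm_eq_nnnorm]
                exact add_le_add le_rfl h2'
        calc ((‖f n‖₊ : ℝ≥0∞)) ^ p ≤ ((‖F t‖₊ : ℝ≥0∞) + L) ^ p :=
              ENNReal.rpow_le_rpow h3' hp0.le
          _ ≤ 2 ^ p * ((‖F t‖₊ : ℝ≥0∞) ^ p + L ^ p) := ennreal_add_rpow_le hp _ _
      -- integrate over I
      have hint : ((‖f n‖₊ : ℝ≥0∞)) ^ p * H ≤ 2 ^ p * (An + L ^ p * H) := by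
        have e1 : ((‖f n‖₊ : ℝ≥0∞)) ^ p * H = ∫⁻ _ in I, ((‖f n‖₊ : ℝ≥0∞)) ^ p := by
          rw [setLIntegral_const, hI, Real.volume_Ioc, hH]
        rw [e1]
        calc (∫⁻ _ in I, ((‖f n‖₊ : ℝ≥0∞)) ^ p) ≤
            ∫⁻ t in I, 2 ^ p * ((‖F t‖₊ : ℝ≥0∞) ^ p + L ^ p) :=
              setLIntegral_mono' measurableSet_Ioc hpt
          _ = 2 ^ p * (An + L ^ p * H) := by
              rw [lintegral_const_mul' _ _ (ENNReal.rpow_ne_top_of_nonneg hp0.le (by norm_num)),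
                lintegral_add_right _ measurable_const, setLIntegral_const, hI, Real.volume_Ioc,
                ← hH, ← hAn]
      -- Hölder for L^p
      have hLp : L ^ p * H ≤ ENNReal.ofReal (max 1 K) ^ p * Bn := by
        have hLle := lintegral_nnnorm_le_holder (G := G) (a := a) (b := b) hp
          (hGi n).aestronglyMeasurable
        have hLp1 : L ^ p ≤ Bn * H ^ (p - 1) := by
          calc L ^ p ≤ (Bn ^ (1/p) * H ^ (1 - 1/p)) ^ p :=
                ENNReal.rpow_le_rpow hLle hp0.le
            _ = Bn * H ^ (p - 1) := by
              rw [ENNReal.mul_rpow_of_nonneg _ _ hp0.le, ← ENNReal.rpow_mul,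
                ← ENNReal.rpow_mul, one_div_mul_cancel hp0.ne', ENNReal.rpow_one,
                show (1 - 1/p) * p = p - 1 by
                  rw [sub_mul, one_mul, one_div, inv_mul_cancel₀ hp0.ne']]
        calc L ^ p * H ≤ Bn * H ^ (p - 1) * H := mul_le_mul_left hLp1 _
          _ = Bn * H ^ p := by
              have hHp : H ^ (p - 1) * H ^ (1:ℝ) = H ^ p := by
                rw [← ENNReal.rpow_add _ _ hH0 hHtop]; norm_num
              rw [mul_assoc, ← hHp, ENNReal.rpow_one]
          _ ≤ Bn * ENNReal.ofReal (max 1 K) ^ p := by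
              gcongr
              have hbK : b - a ≤ max 1 K := le_trans (hstep n) (le_max_right 1 K)
              exact ENNReal.ofReal_le_ofReal hbK
          _ = ENNReal.ofReal (max 1 K) ^ p * Bn := mul_comm _ _
      -- put together
      calc ENNReal.ofReal ((b - a) * ‖f n‖ ^ p)
          = ((‖f n‖₊ : ℝ≥0∞)) ^ p * H := by
            rw [ENNReal.ofReal_mul (by linarith), ofReal_abs_rpow hp0.le, mul_comm, hH]
        _ ≤ 2 ^ p * (An + L ^ p * H) := hint
        _ ≤ 2 ^ p * (An + ENNReal.ofReal (max 1 K) ^ p * Bn) := by gcongr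
    calc (∑' n : ℤ, ENNReal.ofReal ((lam (n + 1) - lam n) * ‖f n‖ ^ p))
        ≤ ∑' n : ℤ, 2 ^ p * ((∫⁻ t in Set.Ioc (lam n) (lam (n + 1)), (‖F t‖₊ : ℝ≥0∞) ^ p) +
            ENNReal.ofReal (max 1 K) ^ p *
              ∫⁻ t in Set.Ioc (lam n) (lam (n + 1)), (‖G t‖₊ : ℝ≥0∞) ^ p) :=
          ENNReal.tsum_le_tsum key
      _ = 2 ^ p * ((∑' n : ℤ, ∫⁻ t in Set.Ioc (lam n) (lam (n + 1)), (‖F t‖₊ : ℝ≥0∞) ^ p) +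
            ENNReal.ofReal (max 1 K) ^ p *
              ∑' n : ℤ, ∫⁻ t in Set.Ioc (lam n) (lam (n + 1)), (‖G t‖₊ : ℝ≥0∞) ^ p) := by
          rw [ENNReal.tsum_mul_left, ENNReal.tsum_add, ENNReal.tsum_mul_left]
      _ ≤ 2 ^ p * (A + ENNReal.ofReal (max 1 K) ^ p * B) := by gcongr
  exact combine_le hp hK h1 h2

end Lower

section Upper
variable {p K : ℝ} {lam : ℤ → ℝ}

lemma upper_est (hp : 1 ≤ p) (hK : 0 < K) (hlam : GoodSeq lam)
    (hstep : ∀ n : ℤ, lam (n + 1) - lam n ≤ K) (f : ℤ → ℂ) :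
    ∃ F G : ℝ → ℂ, AdmissibleExt 1 lam f F G ∧
      (∫⁻ t, (‖F t‖₊ : ℝ≥0∞) ^ p) + (∫⁻ t, (‖G t‖₊ : ℝ≥0∞) ^ p) ≤
        ENNReal.ofReal (8 * max 1 K) ^ p *
          ((∑' n : ℤ, ENNReal.ofReal ((lam (n + 1) - lam n) * ‖dd1 lam f n‖ ^ p)) +
            ∑' n : ℤ, ENNReal.ofReal ((lam (n + 1) - lam n) * ‖f n‖ ^ p)) := by
  have hp0 : (0:ℝ) < p := by linarith
  have hmono := hlam.1
  have hab : ∀ n : ℤ, lam n < lam (n + 1) := fun n => hmono (by omega)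
  choose idx hidx1 hidx2 using hlam.exists_idx
  have idx_eq : ∀ (n : ℤ) (t : ℝ), lam n ≤ t → t < lam (n + 1) → idx t = n :=
    fun n t h1 h2 => idx_unique hmono (hidx1 t) (hidx2 t) h1 h2
  set G : ℝ → ℂ := fun t => dd1 lam f (idx t) with hG
  -- measurability of G
  have hidxm : Measurable idx := by
    apply measurable_to_countable'
    intro n
    have : idx ⁻¹' {n} = Set.Ico (lam n) (lam (n + 1)) := by
      ext t
      simp only [Set.mem_preimage, Set.mem_singleton_iff, Set.mem_Ico]
      exact ⟨fun h => h ▸ ⟨hidx1 t, hidx2 t⟩, fun ⟨h1, h2⟩ => idx_eq n t h1 h2⟩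
    rw [this]
    exact measurableSet_Ico
  have hGmeas : Measurable G := (Measurable.of_discrete (f := dd1 lam f)).comp hidxm
  -- idx is monotone
  have idx_mono : Monotone idx := by
    intro s t hst
    by_contra h
    push_neg at h
    have h1 : idx t + 1 ≤ idx s := by omega
    exact absurd ((hmono.monotone h1).trans ((hidx1 s).trans hst)) (not_le.2 (hidx2 t))
  -- integrability of G
  have hGIcc : ∀ a b : ℝ, IntegrableOn G (Set.Icc a b) := by
    intro a b
    refine Measure.integrableOn_of_bounded
      (M := ∑ k ∈ Finset.Icc (idx a) (idx b), ‖dd1 lam f k‖) ?_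
      hGmeas.aestronglyMeasurable ?_
    · rw [Real.volume_Icc]; exact ENNReal.ofReal_ne_top
    · refine (ae_restrict_iff' measurableSet_Icc).2 (Filter.Eventually.of_forall fun t ht => ?_)
      exact Finset.single_le_sum (f := fun k => ‖dd1 lam f k‖) (fun k _ => norm_nonneg _)
        (Finset.mem_Icc.2 ⟨idx_mono ht.1, idx_mono ht.2⟩)
  have hGint : ∀ a b : ℝ, IntervalIntegrable G volume a b := fun a b =>
    (hGIcc (min a b) (max a b)).intervalIntegrable
  have hGloc : LocallyIntegrable G volume := by
    rw [locallyIntegrable_iff]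
    intro k hk
    obtain ⟨r, hr⟩ := (Metric.isBounded_iff_subset_closedBall 0).1 hk.isBounded
    rw [Real.closedBall_eq_Icc, zero_sub, zero_add] at hr
    exact (hGIcc (-r) r).mono_set hr
  -- definition of F
  set F : ℝ → ℂ := fun t => f 0 + ∫ s in (lam 0)..t, G s with hF
  have hFc : Continuous F :=
    continuous_const.add (intervalIntegral.continuous_primitive hGint (lam 0))
  -- G is constant on each Ico
  have hGon : ∀ (n : ℤ) (t : ℝ), t ∈ Set.Ico (lam n) (lam (n + 1)) → G t = dd1 lam f n := by
    intro n t ht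
    simp only [hG]
    rw [idx_eq n t ht.1 ht.2]
  -- integral over a subsegment
  have hseg : ∀ (n : ℤ) (x y : ℝ), lam n ≤ x → x ≤ y → y ≤ lam (n + 1) →
      (∫ s in x..y, G s) = (y - x) • dd1 lam f n := by
    intro n x y h1 h2 h3
    rw [intervalIntegral.integral_of_le h2]
    have heq : ∫ s in Set.Ioc x y, G s = ∫ s in Set.Ioc x y, dd1 lam f n := by
      refine setIntegral_congr_ae measurableSet_Ioc ?_
      filter_upwards [compl_mem_ae_iff.2 (measure_singleton (lam (n + 1)))] with s hs hmem
      simp only [Set.mem_compl_iff, Set.mem_singleton_iff] at hs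
      exact hGon n s ⟨h1.trans hmem.1.le, lt_of_le_of_ne (hmem.2.trans h3) hs⟩
    rw [heq, setIntegral_const, Real.volume_real_Ioc_of_le h2]
  have hstep' : ∀ n : ℤ, (∫ s in lam n..lam (n + 1), G s) = f (n + 1) - f n := by
    intro n
    have hc : ((lam (n + 1) - lam n : ℝ) : ℂ) ≠ 0 :=
      Complex.ofReal_ne_zero.2 (sub_ne_zero.2 (hab n).ne')
    rw [hseg n _ _ le_rfl (hab n).le le_rfl, Complex.real_smul, dd1, mul_comm,
      div_mul_cancel₀ _ hc]
  -- telescoping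
  have hkey : ∀ n : ℤ, (∫ s in (lam 0)..lam n, G s) = f n - f 0 := by
    intro n
    induction n using Int.induction_on with
    | zero => simp
    | succ k ih =>
      rw [← intervalIntegral.integral_add_adjacent_intervals (hGint (lam 0) (lam k))
        (hGint (lam k) (lam (k + 1))), ih, hstep' k]
      ring
    | pred k ih =>
      have hadj := intervalIntegral.integral_add_adjacent_intervals
        (hGint (lam 0) (lam (-k - 1))) (hGint (lam (-k - 1)) (lam (-k)))
      have h2 := hstep' (-k - 1)
      rw [show (-k - 1 + 1 : ℤ) = -k by ring] at h2
      rw [h2, ih] at hadj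
      linear_combination hadj
  have hFlam : ∀ n : ℤ, F (lam n) = f n := by
    intro n
    simp only [hF]
    rw [hkey n]
    ring
  -- admissibility
  have hAdm : AdmissibleExt 1 lam f F G := by
    refine ⟨?_, hGloc, ?_, hFlam⟩
    · exact contDiff_zero.2 hFc
    · intro a b _
      simp only [show (1 - 1 : ℕ) = 0 from rfl, iteratedDeriv_zero, hF]
      rw [← intervalIntegral.integral_add_adjacent_intervals (hGint (lam 0) a) (hGint a b)]
      ring
  -- partition of the line
  have hpart : ∀ g : ℝ → ℝ≥0∞, (∫⁻ t, g t) =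
      ∑' n : ℤ, ∫⁻ t in Set.Ico (lam n) (lam (n + 1)), g t := by
    intro g
    rw [← setLIntegral_univ, ← iUnion_Ico_eq_univ hlam,
      lintegral_iUnion (fun n => measurableSet_Ico) (pairwise_disjoint_Ico hmono)]
  -- value of F on each interval
  have hFon : ∀ (n : ℤ) (t : ℝ), t ∈ Set.Ico (lam n) (lam (n + 1)) →
      F t = f n + (t - lam n) • dd1 lam f n := by
    intro n t ht
    simp only [hF]
    rw [← intervalIntegral.integral_add_adjacent_intervals (hGint (lam 0) (lam n))
      (hGint (lam n) t), hkey n, hseg n (lam n) t le_rfl ht.1 ht.2.le]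
    ring
  -- compute B
  have hBcalc : (∫⁻ t, (‖G t‖₊ : ℝ≥0∞) ^ p) =
      ∑' n : ℤ, ENNReal.ofReal ((lam (n + 1) - lam n) * ‖dd1 lam f n‖ ^ p) := by
    rw [hpart]
    refine tsum_congr fun n => ?_
    rw [setLIntegral_congr_fun measurableSet_Ico (g := fun _ => (‖dd1 lam f n‖₊ : ℝ≥0∞) ^ p)
      (fun t ht => by rw [hGon n t ht]),
      setLIntegral_const, Real.volume_Ico, ← ofReal_abs_rpow hp0.le,
      ← ENNReal.ofReal_mul (by positivity), mul_comm]
  -- bound A on each interval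
  have hAn : ∀ n : ℤ, (∫⁻ t in Set.Ico (lam n) (lam (n + 1)), (‖F t‖₊ : ℝ≥0∞) ^ p) ≤
      2 ^ p * (ENNReal.ofReal ((lam (n + 1) - lam n) * ‖f n‖ ^ p) +
        ENNReal.ofReal (max 1 K) ^ p *
          ENNReal.ofReal ((lam (n + 1) - lam n) * ‖dd1 lam f n‖ ^ p)) := by
    intro n
    have hbapos : (0:ℝ) < lam (n + 1) - lam n := by linarith [hab n]
    set d : ℝ := ‖dd1 lam f n‖ with hd
    have hd0 : 0 ≤ d := norm_nonneg _
    set h : ℝ := lam (n + 1) - lam n with hh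
    set Hn : ℝ≥0∞ := ENNReal.ofReal h with hHn
    have hHK : Hn ≤ ENNReal.ofReal (max 1 K) :=
      ENNReal.ofReal_le_ofReal (le_trans (hstep n) (le_max_right 1 K))
    have hpt : ∀ t ∈ Set.Ico (lam n) (lam (n + 1)), (‖F t‖₊ : ℝ≥0∞) ^ p ≤
        2 ^ p * ((‖f n‖₊ : ℝ≥0∞) ^ p + ENNReal.ofReal (h * d) ^ p) := by
      intro t ht
      have hdd : ‖dd1 lam f n‖ = d := by rw [hd]
      have hFt : ‖F t‖ ≤ ‖f n‖ + h * d := by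
        rw [hFon n t ht]
        have h1 : t - lam n ≤ h := by
          have := ht.2
          rw [hh]; linarith
        have h2 : (0:ℝ) ≤ t - lam n := by linarith [ht.1]
        calc ‖f n + (t - lam n) • dd1 lam f n‖
            ≤ ‖f n‖ + ‖(t - lam n) • dd1 lam f n‖ := norm_add_le _ _
          _ = ‖f n‖ + (t - lam n) * d := by
              rw [norm_smul, Real.norm_eq_abs, abs_of_nonneg h2, hdd]
          _ ≤ ‖f n‖ + h * d := by nlinarith
      have hle : (‖F t‖₊ : ℝ≥0∞) ≤ (‖f n‖₊ : ℝ≥0∞) + ENNReal.ofReal (h * d) := by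
        calc (‖F t‖₊ : ℝ≥0∞) = ENNReal.ofReal ‖F t‖ := (ofReal_norm_eq_enorm _).symm
          _ ≤ ENNReal.ofReal (‖f n‖ + h * d) := ENNReal.ofReal_le_ofReal hFt
          _ = ENNReal.ofReal ‖f n‖ + ENNReal.ofReal (h * d) :=
              ENNReal.ofReal_add (norm_nonneg _) (by positivity)
          _ = (‖f n‖₊ : ℝ≥0∞) + ENNReal.ofReal (h * d) := by
              rw [ofReal_norm_eq_enorm, enorm_eq_nnnorm]
      calc (‖F t‖₊ : ℝ≥0∞) ^ p ≤ ((‖f n‖₊ : ℝ≥0∞) + ENNReal.ofReal (h * d)) ^ p :=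
            ENNReal.rpow_le_rpow hle hp0.le
        _ ≤ 2 ^ p * ((‖f n‖₊ : ℝ≥0∞) ^ p + ENNReal.ofReal (h * d) ^ p) :=
            ennreal_add_rpow_le hp _ _
    calc (∫⁻ t in Set.Ico (lam n) (lam (n + 1)), (‖F t‖₊ : ℝ≥0∞) ^ p)
        ≤ ∫⁻ _ in Set.Ico (lam n) (lam (n + 1)),
            2 ^ p * ((‖f n‖₊ : ℝ≥0∞) ^ p + ENNReal.ofReal (h * d) ^ p) :=
          setLIntegral_mono' measurableSet_Ico hpt
      _ = 2 ^ p * ((‖f n‖₊ : ℝ≥0∞) ^ p * Hn + ENNReal.ofReal (h * d) ^ p * Hn) := by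
          rw [setLIntegral_const, Real.volume_Ico, ← hh, ← hHn]
          ring
      _ ≤ 2 ^ p * (ENNReal.ofReal (h * ‖f n‖ ^ p) +
            ENNReal.ofReal (max 1 K) ^ p * ENNReal.ofReal (h * d ^ p)) := by
          gcongr 2 ^ p * (?_ + ?_)
          · rw [ENNReal.ofReal_mul hbapos.le, ofReal_abs_rpow hp0.le, mul_comm]
          · rw [ENNReal.ofReal_mul hbapos.le, ENNReal.mul_rpow_of_nonneg _ _ hp0.le,
              ENNReal.ofReal_rpow_of_nonneg hd0 hp0.le, ← hHn]
            calc Hn ^ p * ENNReal.ofReal (d ^ p) * Hn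
                = Hn ^ p * (Hn * ENNReal.ofReal (d ^ p)) := by ring
              _ ≤ ENNReal.ofReal (max 1 K) ^ p * (Hn * ENNReal.ofReal (d ^ p)) :=
                  mul_le_mul_left (ENNReal.rpow_le_rpow hHK hp0.le) _
              _ = ENNReal.ofReal (max 1 K) ^ p * ENNReal.ofReal (h * d ^ p) := by
                  rw [hHn, ← ENNReal.ofReal_mul hbapos.le]
      _ = 2 ^ p * (ENNReal.ofReal (h * ‖f n‖ ^ p) +
            ENNReal.ofReal (max 1 K) ^ p *
              ENNReal.ofReal (h * ‖dd1 lam f n‖ ^ p)) := by rw [hd]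
  -- conclude
  refine ⟨F, G, hAdm, ?_⟩
  rw [add_comm ((∑' n : ℤ, ENNReal.ofReal ((lam (n + 1) - lam n) *
    ‖dd1 lam f n‖ ^ p))) _]
  rw [add_comm (∫⁻ t, (‖F t‖₊ : ℝ≥0∞) ^ p) _]
  refine combine_le hp hK (le_of_eq hBcalc) ?_
  calc (∫⁻ t, (‖F t‖₊ : ℝ≥0∞) ^ p)
      = ∑' n : ℤ, ∫⁻ t in Set.Ico (lam n) (lam (n + 1)), (‖F t‖₊ : ℝ≥0∞) ^ p := hpart _
    _ ≤ ∑' n : ℤ, 2 ^ p * (ENNReal.ofReal ((lam (n + 1) - lam n) * ‖f n‖ ^ p) +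
          ENNReal.ofReal (max 1 K) ^ p *
            ENNReal.ofReal ((lam (n + 1) - lam n) * ‖dd1 lam f n‖ ^ p)) :=
        ENNReal.tsum_le_tsum hAn
    _ = 2 ^ p * ((∑' n : ℤ, ENNReal.ofReal ((lam (n + 1) - lam n) * ‖f n‖ ^ p)) +
          ENNReal.ofReal (max 1 K) ^ p *
            ∑' n : ℤ, ENNReal.ofReal ((lam (n + 1) - lam n) * ‖dd1 lam f n‖ ^ p)) := by
        rw [ENNReal.tsum_mul_left, ENNReal.tsum_add, ENNReal.tsum_mul_left]

end Upper

/-- for every `K > 0`, equivalence (constants depending only on `K`) of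
`‖·‖_{W^1_p|Λ}` with `(∑_n (λ_{n+1}-λ_n)|f[λ_n,λ_{n+1}]|^p + ∑_n (λ_{n+1}-λ_n)|f_n|^p)^{1/p}`,
for sequences with steps bounded by `K`. -/
theorem stmt4 (K : ℝ) (hK : 0 < K) :
    ∃ c C : ℝ, 0 < c ∧ c ≤ C ∧
      ∀ p : ℝ, 1 ≤ p → ∀ lam : ℤ → ℝ, GoodSeq lam →
        (∀ n : ℤ, lam (n + 1) - lam n ≤ K) → ∀ f : ℤ → ℂ,
        ENNReal.ofReal c *
            ((∑' n : ℤ, ENNReal.ofReal ((lam (n + 1) - lam n) *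
                ‖dd1 lam f n‖ ^ p)) +
              ∑' n : ℤ, ENNReal.ofReal ((lam (n + 1) - lam n) *
                ‖f n‖ ^ p)) ^ (1 / p) ≤ traceW 1 p lam f ∧
        traceW 1 p lam f ≤
          ENNReal.ofReal C *
            ((∑' n : ℤ, ENNReal.ofReal ((lam (n + 1) - lam n) *
                ‖dd1 lam f n‖ ^ p)) +
              ∑' n : ℤ, ENNReal.ofReal ((lam (n + 1) - lam n) *
                ‖f n‖ ^ p)) ^ (1 / p) := by
  have hM : (1:ℝ) ≤ max 1 K := le_max_left _ _
  have hC1 : (1:ℝ) ≤ 8 * max 1 K := by nlinarith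
  have hCpos : (0:ℝ) < 8 * max 1 K := by linarith
  refine ⟨(8 * max 1 K)⁻¹, 8 * max 1 K, by positivity, ?_, ?_⟩
  · exact le_trans (inv_le_one_of_one_le₀ hC1) hC1
  intro p hp lam hlam hstep f
  have hp0 : (0:ℝ) < p := lt_of_lt_of_le one_pos hp
  have hconv : ∀ h : ℝ → ℂ,
      (∫⁻ t, ENNReal.ofReal (‖h t‖ ^ p)) = ∫⁻ t, (‖h t‖₊ : ℝ≥0∞) ^ p :=
    fun h => lintegral_congr fun t => ofReal_abs_rpow hp0.le _
  have hpow : ∀ T : ℝ≥0∞, (ENNReal.ofReal (8 * max 1 K) ^ p * T) ^ (1/p)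
      = ENNReal.ofReal (8 * max 1 K) * T ^ (1/p) := by
    intro T
    rw [ENNReal.mul_rpow_of_nonneg _ _ (by positivity), ← ENNReal.rpow_mul,
      mul_one_div_cancel hp0.ne', ENNReal.rpow_one]
  constructor
  · -- lower bound
    rw [traceW]
    refine le_iInf fun F => le_iInf fun G => le_iInf fun hFG => ?_
    rw [hconv F, hconv G]
    have hest := lower_est hp hK hlam hstep f hFG
    calc ENNReal.ofReal (8 * max 1 K)⁻¹ *
          ((∑' n : ℤ, ENNReal.ofReal ((lam (n + 1) - lam n) *
              ‖dd1 lam f n‖ ^ p)) +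
            ∑' n : ℤ, ENNReal.ofReal ((lam (n + 1) - lam n) *
              ‖f n‖ ^ p)) ^ (1 / p)
        ≤ ENNReal.ofReal (8 * max 1 K)⁻¹ *
            (ENNReal.ofReal (8 * max 1 K) ^ p *
              ((∫⁻ t, (‖F t‖₊ : ℝ≥0∞) ^ p) + ∫⁻ t, (‖G t‖₊ : ℝ≥0∞) ^ p)) ^ (1/p) :=
          mul_le_mul_right (ENNReal.rpow_le_rpow hest (by positivity)) _
      _ = (ENNReal.ofReal (8 * max 1 K)⁻¹ * ENNReal.ofReal (8 * max 1 K)) *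
            ((∫⁻ t, (‖F t‖₊ : ℝ≥0∞) ^ p) + ∫⁻ t, (‖G t‖₊ : ℝ≥0∞) ^ p) ^ (1/p) := by
          rw [hpow]; ring
      _ = ((∫⁻ t, (‖F t‖₊ : ℝ≥0∞) ^ p) + ∫⁻ t, (‖G t‖₊ : ℝ≥0∞) ^ p) ^ (1/p) := by
          rw [← ENNReal.ofReal_mul (by positivity), inv_mul_cancel₀ hCpos.ne',
            ENNReal.ofReal_one, one_mul]
  · -- upper bound
    obtain ⟨F, G, hAdm, hest⟩ := upper_est hp hK hlam hstep f
    calc traceW 1 p lam f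
        ≤ ((∫⁻ t, ENNReal.ofReal (‖F t‖ ^ p)) +
            ∫⁻ t, ENNReal.ofReal (‖G t‖ ^ p)) ^ (1 / p) := by
          rw [traceW]
          exact iInf_le_of_le F (iInf_le_of_le G (iInf_le _ hAdm))
      _ = ((∫⁻ t, (‖F t‖₊ : ℝ≥0∞) ^ p) + ∫⁻ t, (‖G t‖₊ : ℝ≥0∞) ^ p) ^ (1 / p) := by
          rw [hconv F, hconv G]
      _ ≤ (ENNReal.ofReal (8 * max 1 K) ^ p *
            ((∑' n : ℤ, ENNReal.ofReal ((lam (n + 1) - lam n) *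
                ‖dd1 lam f n‖ ^ p)) +
              ∑' n : ℤ, ENNReal.ofReal ((lam (n + 1) - lam n) *
                ‖f n‖ ^ p))) ^ (1/p) :=
          ENNReal.rpow_le_rpow hest (by positivity)
      _ = ENNReal.ofReal (8 * max 1 K) *
            ((∑' n : ℤ, ENNReal.ofReal ((lam (n + 1) - lam n) *
                ‖dd1 lam f n‖ ^ p)) +
              ∑' n : ℤ, ENNReal.ofReal ((lam (n + 1) - lam n) *
                ‖f n‖ ^ p)) ^ (1/p) := hpow _
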